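/- arXiv:2301.11530 — 2 statements merged into one kernel-verified Lean document; each statement's English description precedes it below -/
import Mathlib

section
/- With the setting of the drift identity (W(x) = ½Σxᵢ², LW as defined there), for every x ∈ ℤ₊ⁿ: LW(x) ≤ a(1−b(x))·λ·(Σᵢ pᵢxᵢ − x_min) + (λ·x_min − μ·‖x‖₁) + ½(λ + n·μ). -/
lemma wdiff_add (n : ℕ) (x : Fin n → ℕ) (i : Fin n) :
    (1 / 2 : ℝ) * ∑ j, ((x j + if j = i then 1 else 0 : ℕ) : ℝ) ^ 2
      - (1 / 2) * ∑ j, (x j : ℝ) ^ 2 = (x i : ℝ) + 1 / 2 := by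
  have h : ∀ j, ((x j + if j = i then 1 else 0 : ℕ) : ℝ) ^ 2
      = (x j : ℝ) ^ 2 + (if j = i then 2 * (x j : ℝ) + 1 else 0) := by
    intro j
    by_cases hj : j = i <;> simp [hj] <;> push_cast <;> ring
  rw [Finset.sum_congr rfl fun j _ => h j, Finset.sum_add_distrib,
    Finset.sum_ite_eq' Finset.univ i (fun j => 2 * (x j : ℝ) + 1)]
  simp
  ring

lemma wdiff_sub (n : ℕ) (x : Fin n → ℕ) (i : Fin n) (hi : 0 < x i) :
    (1 / 2 : ℝ) * ∑ j, ((x j - if j = i then 1 else 0 : ℕ) : ℝ) ^ 2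
      - (1 / 2) * ∑ j, (x j : ℝ) ^ 2 = -(x i : ℝ) + 1 / 2 := by
  have h : ∀ j, ((x j - if j = i then 1 else 0 : ℕ) : ℝ) ^ 2
      = (x j : ℝ) ^ 2 + (if j = i then -(2 * (x j : ℝ)) + 1 else 0) := by
    intro j
    by_cases hj : j = i
    · subst hj
      rw [if_pos rfl, if_pos rfl, Nat.cast_sub hi]
      push_cast; ring
    · simp [hj]
  rw [Finset.sum_congr rfl fun j _ => h j, Finset.sum_add_distrib,
    Finset.sum_ite_eq' Finset.univ i (fun j => -(2 * (x j : ℝ)) + 1)]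
  simp
  ring

theorem stmt6 (n : ℕ) (hn : 1 ≤ n) (lam mu a : ℝ) (hlam : 0 < lam) (hmu : 0 < mu)
    (ha0 : 0 ≤ a) (ha1 : a ≤ 1)
    (p : Fin n → ℝ) (hp : ∀ i, 0 ≤ p i) (hps : ∑ i, p i = 1)
    (b : ℝ) (hb0 : 0 ≤ b) (hb1 : b ≤ 1)
    (x : Fin n → ℕ) (m : Fin n) (hm : ∀ i, x m ≤ x i)
    (W : (Fin n → ℕ) → ℝ) (hW : ∀ y, W y = (1 / 2) * ∑ i, (y i : ℝ) ^ 2)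
    (LW : ℝ)
    (hLW : LW = a * (1 - b) * lam *
        (∑ i, p i * (W (fun j => x j + if j = i then 1 else 0) - W x))
      + (1 - a * (1 - b)) * lam * (W (fun j => x j + if j = m then 1 else 0) - W x)
      + mu * ∑ i, (if 0 < x i then (1 : ℝ) else 0) *
          (W (fun j => x j - if j = i then 1 else 0) - W x)) :
    LW ≤ a * (1 - b) * lam * ((∑ i, p i * (x i : ℝ)) - (x m : ℝ))
      + (lam * (x m : ℝ) - mu * (∑ i, (x i : ℝ)))
      + (lam + n * mu) / 2 := by
  have hadd : ∀ i, W (fun j => x j + if j = i then 1 else 0) - W x = (x i : ℝ) + 1 / 2 := by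
    intro i; rw [hW, hW]; exact wdiff_add n x i
  have hsum1 : ∑ i, p i * (W (fun j => x j + if j = i then 1 else 0) - W x)
      = (∑ i, p i * (x i : ℝ)) + 1 / 2 := by
    simp_rw [hadd, mul_add, Finset.sum_add_distrib, ← Finset.sum_mul, hps]
    ring
  have hsub : ∑ i, (if 0 < x i then (1 : ℝ) else 0) *
      (W (fun j => x j - if j = i then 1 else 0) - W x)
      ≤ ∑ i, (1 / 2 - (x i : ℝ)) := by
    apply Finset.sum_le_sum
    intro i _
    by_cases hi : 0 < x i
    · rw [if_pos hi, one_mul, hW, hW, wdiff_sub n x i hi]; linarith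
    · rw [if_neg hi, zero_mul]
      have : x i = 0 := Nat.eq_zero_of_not_pos hi
      simp [this]
  have hsub2 : ∑ i, (1 / 2 - (x i : ℝ)) = (n : ℝ) / 2 - ∑ i, (x i : ℝ) := by
    rw [Finset.sum_sub_distrib]
    simp
    ring
  rw [hLW, hsum1, hadd m]
  have := mul_le_mul_of_nonneg_left (hsub.trans_eq hsub2) hmu.le
  nlinarith [this]
end

section
/- Suppose there exists c > 0 such that for all nonzero x ∈ ℤ₊ⁿ, μ − λ·x_min/‖x‖₁ − a(1−b(x))·λ·(Σᵢ pᵢxᵢ − x_min)/‖x‖₁ ≥ c. Then with W(x) = ½Σᵢxᵢ² and LW the generator drift, LW(x) ≤ −c·‖x‖₁ + ½(λ + n·μ) for all x ∈ ℤ₊ⁿ (including x = 0). -/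
theorem stmt7 (n : ℕ) (hn : 1 ≤ n) (lam mu a : ℝ) (hlam : 0 < lam) (hmu : 0 < mu)
    (ha0 : 0 ≤ a) (ha1 : a ≤ 1)
    (p : Fin n → ℝ) (hp : ∀ i, 0 ≤ p i) (hps : ∑ i, p i = 1)
    (b : (Fin n → ℕ) → ℝ) (hb : ∀ y, 0 ≤ b y ∧ b y ≤ 1)
    (midx : (Fin n → ℕ) → Fin n) (hmidx : ∀ (y : Fin n → ℕ) (i : Fin n), y (midx y) ≤ y i)
    (W : (Fin n → ℕ) → ℝ) (hW : ∀ y, W y = (1 / 2) * ∑ i, (y i : ℝ) ^ 2)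
    (LW : (Fin n → ℕ) → ℝ)
    (hLW : ∀ y, LW y = a * (1 - b y) * lam *
        (∑ i, p i * (W (fun j => y j + if j = i then 1 else 0) - W y))
      + (1 - a * (1 - b y)) * lam * (W (fun j => y j + if j = midx y then 1 else 0) - W y)
      + mu * ∑ i, (if 0 < y i then (1 : ℝ) else 0) *
          (W (fun j => y j - if j = i then 1 else 0) - W y))
    (c : ℝ) (hc : 0 < c)
    (hdrift : ∀ y : Fin n → ℕ, y ≠ 0 →
      c ≤ mu - lam * (y (midx y) : ℝ) / (∑ i, (y i : ℝ))
        - a * (1 - b y) * lam * ((∑ i, p i * (y i : ℝ)) - (y (midx y) : ℝ)) / (∑ i, (y i : ℝ))) :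
    ∀ y : Fin n → ℕ, LW y ≤ -c * (∑ i, (y i : ℝ)) + (lam + n * mu) / 2 := by
  intro y
  set S : ℝ := ∑ i, (y i : ℝ) with hS
  set P : ℝ := ∑ i, p i * (y i : ℝ) with hP
  set q : ℝ := a * (1 - b y) * lam with hq
  -- increment lemma
  have hincr : ∀ i : Fin n, W (fun j => y j + if j = i then 1 else 0) - W y
      = (y i : ℝ) + 1 / 2 := by
    intro i
    rw [hW, hW]
    have key : ∀ j : Fin n, ((y j + if j = i then 1 else 0 : ℕ) : ℝ) ^ 2
        = (y j : ℝ) ^ 2 + (if j = i then 2 * (y j : ℝ) + 1 else 0) := by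
      intro j
      by_cases h : j = i <;> simp [h] <;> push_cast <;> ring
    simp only [key, Finset.sum_add_distrib, Finset.sum_ite_eq' Finset.univ i,
      Finset.mem_univ, if_true]
    ring
  -- decrement lemma
  have hdecr : ∀ i : Fin n, 0 < y i → W (fun j => y j - if j = i then 1 else 0) - W y
      = -(y i : ℝ) + 1 / 2 := by
    intro i hi
    rw [hW, hW]
    have key : ∀ j : Fin n, ((y j - if j = i then 1 else 0 : ℕ) : ℝ) ^ 2
        = (y j : ℝ) ^ 2 + (if j = i then -(2 * (y j : ℝ)) + 1 else 0) := by
      intro j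
      by_cases h : j = i
      · subst h
        have h1 : (1 : ℕ) ≤ y j := hi
        rw [if_pos rfl, if_pos rfl, Nat.cast_sub h1]
        push_cast
        ring
      · simp [h]
    simp only [key, Finset.sum_add_distrib, Finset.sum_ite_eq' Finset.univ i,
      Finset.mem_univ, if_true]
    ring
  -- bound the death term
  have hterm : ∀ i : Fin n, (if 0 < y i then (1 : ℝ) else 0) *
      (W (fun j => y j - if j = i then 1 else 0) - W y) ≤ -(y i : ℝ) + 1 / 2 := by
    intro i
    by_cases h : 0 < y i
    · rw [if_pos h, one_mul, hdecr i h]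
    · rw [if_neg h, zero_mul]
      have : y i = 0 := Nat.eq_zero_of_not_pos h
      rw [this]
      norm_num
  have hTsum : ∑ i, (if 0 < y i then (1 : ℝ) else 0) *
      (W (fun j => y j - if j = i then 1 else 0) - W y) ≤ -S + n / 2 := by
    calc _ ≤ ∑ i : Fin n, (-(y i : ℝ) + 1 / 2) := Finset.sum_le_sum fun i _ => hterm i
    _ = -S + n / 2 := by
        rw [Finset.sum_add_distrib, Finset.sum_neg_distrib, ← hS, Finset.sum_const,
          Finset.card_univ, Fintype.card_fin, nsmul_eq_mul]
        ring
  -- compute birth terms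
  have hbirth : ∑ i, p i * (W (fun j => y j + if j = i then 1 else 0) - W y) = P + 1 / 2 := by
    simp only [hincr, mul_add]
    rw [Finset.sum_add_distrib, ← Finset.sum_mul, hps, ← hP]
    ring
  have hq0 : 0 ≤ q := by
    have := (hb y).2
    have h1 : 0 ≤ 1 - b y := by linarith
    exact mul_nonneg (mul_nonneg ha0 h1) hlam.le
  -- main bound on LW
  have hmain : LW y ≤ q * P + (lam - q) * (y (midx y) : ℝ) + lam / 2 + mu * (-S + n / 2) := by
    rw [hLW y, hbirth, hincr (midx y)]
    have h3 : mu * ∑ i, (if 0 < y i then (1 : ℝ) else 0) *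
        (W (fun j => y j - if j = i then 1 else 0) - W y) ≤ mu * (-S + n / 2) :=
      mul_le_mul_of_nonneg_left hTsum hmu.le
    have : a * (1 - b y) * lam * (P + 1 / 2)
        + (1 - a * (1 - b y)) * lam * ((y (midx y) : ℝ) + 1 / 2)
        = q * P + (lam - q) * (y (midx y) : ℝ) + lam / 2 := by
      rw [hq]; ring
    linarith
  -- final step
  have hkey : q * P + (lam - q) * (y (midx y) : ℝ) - mu * S ≤ -c * S := by
    by_cases hy : y = 0
    · subst hy
      have hP0 : P = 0 := by simp [hP]
      have hS0 : S = 0 := by simp [hS]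
      simp [hP0, hS0]
    · have hSpos : 0 < S := by
        obtain ⟨i, hi⟩ : ∃ i, 0 < y i := by
          by_contra h
          push_neg at h
          exact hy (funext fun i => Nat.eq_zero_of_not_pos (by simpa using h i))
        have : (0 : ℝ) < (y i : ℝ) := by exact_mod_cast hi
        refine lt_of_lt_of_le this ?_
        exact Finset.single_le_sum (f := fun j => ((y j : ℝ)))
          (fun j _ => by positivity) (Finset.mem_univ i)
      have hd := hdrift y hy
      rw [← hP, ← hS, ← hq] at hd
      have hd2 : c * S ≤ (mu - lam * (y (midx y) : ℝ) / S - q * (P - (y (midx y) : ℝ)) / S) * S :=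
        mul_le_mul_of_nonneg_right hd hSpos.le
      have hd3 : (mu - lam * (y (midx y) : ℝ) / S - q * (P - (y (midx y) : ℝ)) / S) * S
          = mu * S - lam * (y (midx y) : ℝ) - q * (P - (y (midx y) : ℝ)) := by
        field_simp
      rw [hd3] at hd2
      nlinarith
  have hnm : lam / 2 + mu * (n / 2) = (lam + n * mu) / 2 := by ring
  nlinarith [hmain, hkey]
end
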